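/- Define C'_{a,b}(X) = ∂₀(Q̃_{a,b}(X)), where ∂₀(f) = (f - s₀f)/(2x₁) and s₀ replaces x₁ by -x₁. Then for all a > b ≥ 0, C'_{a,b}(X) = Q̃_{a-1}(X') Q̃_b(X') - Q̃_a(X') Q̃_{b-1}(X'), where X' = (x₂,...,x_n). -/

import Mathlib

open MvPolynomial

/-- The `i`-th elementary symmetric polynomial in the variables `{X j : j ∈ S}`,
i.e. `Q̃_i` on the variable set `S`. -/
noncomputable def Qt (S : Finset ℕ) (i : ℕ) : MvPolynomial ℕ ℤ :=
  ∑ t ∈ Finset.powersetCard i S, ∏ j ∈ t, X j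

/-- The two-row `Q̃`-polynomial
`Q̃_{i,j} = Q̃_i Q̃_j + 2 ∑_{k=1}^{j} (-1)^k Q̃_{i+k} Q̃_{j-k}` (for `i ≥ j`). -/
noncomputable def Qtp (S : Finset ℕ) (i j : ℕ) : MvPolynomial ℕ ℤ :=
  Qt S i * Qt S j +
    2 * ∑ k ∈ Finset.Icc 1 j, (-1 : MvPolynomial ℕ ℤ) ^ k * Qt S (i + k) * Qt S (j - k)

/-- Fuel-based Laplace (Pfaffian) recursion for `Q̃_λ` on a list of parts of even
length: `Q̃_ν = ∑_{j} (-1)^{j-1} Q̃_{ν_j,ν_r} Q̃_{ν∖{ν_j,ν_r}}`. -/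
noncomputable def Qpf (S : Finset ℕ) : ℕ → List ℕ → MvPolynomial ℕ ℤ
  | 0, _ => 1
  | fuel + 1, l =>
    if l.length < 2 then 1
    else
      ∑ j ∈ Finset.range (l.length - 1),
        (-1 : MvPolynomial ℕ ℤ) ^ j * Qtp S (l.getD j 0) (l.getLast?.getD 0) *
          Qpf S fuel (l.dropLast.eraseIdx j)

/-- `Q̃_λ` for a partition `λ` (list of parts), padding with a zero part
to make the length even. -/
noncomputable def Qlam (S : Finset ℕ) (l : List ℕ) : MvPolynomial ℕ ℤ :=
  Qpf S (l.length + 1) (if Even l.length then l else l ++ [0])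

/-- `Q̃_i` with integer index, vanishing for `i < 0`. -/
noncomputable def QtZ (S : Finset ℕ) (i : ℤ) : MvPolynomial ℕ ℤ :=
  if 0 ≤ i then Qt S i.toNat else 0

/-- `Q̃_{i,j}` with integer indices (`i ≥ j`), vanishing when an index is negative. -/
noncomputable def QtpZ (S : Finset ℕ) (i j : ℤ) : MvPolynomial ℕ ℤ :=
  QtZ S i * QtZ S j +
    2 * ∑ k ∈ Finset.Icc 1 j.toNat,
      (-1 : MvPolynomial ℕ ℤ) ^ k * QtZ S (i + k) * QtZ S (j - k)

/-- The operator `s₀`, replacing `x₁ = X 0` by `-x₁`. -/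
noncomputable def s0 : MvPolynomial ℕ ℤ →+* MvPolynomial ℕ ℤ :=
  (MvPolynomial.bind₁ fun j => if j = 0 then -(X 0 : MvPolynomial ℕ ℤ) else X j).toRingHom

lemma s0_apply (f : MvPolynomial ℕ ℤ) :
    s0 f = MvPolynomial.bind₁ (fun j => if j = 0 then -(X 0 : MvPolynomial ℕ ℤ) else X j) f := rfl

lemma s0_X0 : s0 (X 0) = -X 0 := by simp [s0_apply]

lemma s0_Qt_Ico (n : ℕ) (i : ℕ) : s0 (Qt (Finset.Ico 1 n) i) = Qt (Finset.Ico 1 n) i := by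
  rw [s0_apply, Qt, map_sum]
  refine Finset.sum_congr rfl fun t ht => ?_
  rw [map_prod]
  refine Finset.prod_congr rfl fun j hj => ?_
  have : j ≠ 0 := by
    have := (Finset.mem_powersetCard.mp ht).1 hj
    simp [Finset.mem_Ico] at this
    omega
  simp [this]

lemma s0_QtZ_Ico (n : ℕ) (i : ℤ) : s0 (QtZ (Finset.Ico 1 n) i) = QtZ (Finset.Ico 1 n) i := by
  unfold QtZ; split <;> simp [s0_Qt_Ico]

lemma range_eq_insert (n : ℕ) (hn : 1 ≤ n) :
    Finset.range n = insert 0 (Finset.Ico 1 n) := by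
  ext j; simp [Finset.mem_range, Finset.mem_Ico]; omega

lemma Qt_range_succ (n : ℕ) (hn : 1 ≤ n) (i : ℕ) :
    Qt (Finset.range n) (i + 1)
      = Qt (Finset.Ico 1 n) (i + 1) + X 0 * Qt (Finset.Ico 1 n) i := by
  have h0 : (0 : ℕ) ∉ Finset.Ico 1 n := by simp
  rw [range_eq_insert n hn, Qt, Finset.powersetCard_succ_insert h0, Finset.sum_union]
  · rw [Finset.sum_image ?inj]
    case inj =>
      intro t ht u hu h
      have ht0 : 0 ∉ t := fun h' => h0 ((Finset.mem_powersetCard.mp ht).1 h')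
      have hu0 : 0 ∉ u := fun h' => h0 ((Finset.mem_powersetCard.mp hu).1 h')
      have : (insert 0 t).erase 0 = (insert 0 u).erase 0 := by rw [h]
      rwa [Finset.erase_insert ht0, Finset.erase_insert hu0] at this
    congr 1
    rw [Qt, Finset.mul_sum]
    refine Finset.sum_congr rfl fun t ht => ?_
    have ht0 : 0 ∉ t := fun h' => h0 ((Finset.mem_powersetCard.mp ht).1 h')
    rw [Finset.prod_insert ht0]
  · rw [Finset.disjoint_right]
    intro t ht hts
    simp only [Finset.mem_image] at ht
    obtain ⟨u, hu, rfl⟩ := ht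
    exact h0 ((Finset.mem_powersetCard.mp hts).1 (Finset.mem_insert_self 0 u))

lemma QtZ_range (n : ℕ) (hn : 1 ≤ n) (i : ℤ) :
    QtZ (Finset.range n) i
      = QtZ (Finset.Ico 1 n) i + X 0 * QtZ (Finset.Ico 1 n) (i - 1) := by
  rcases lt_trichotomy i 0 with h | rfl | h
  · have h1 : i - 1 < 0 := by omega
    simp [QtZ, not_le.mpr h, not_le.mpr h1]
    intro h'; omega
  · simp [QtZ, Qt]
  · have h0 : 0 ≤ i := le_of_lt h
    have h1 : (0 : ℤ) ≤ i - 1 := by omega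
    have ht : i.toNat = (i - 1).toNat + 1 := by omega
    simp only [QtZ, if_pos h0, if_pos h1, ht]
    exact Qt_range_succ n hn _

lemma tele {P : Type*} [CommRing P] (E : ℤ → P) (a b : ℤ) (m : ℕ) :
    ∑ k ∈ Finset.Icc 1 m, (-1 : P) ^ k * (E (a + k) * E (b - k - 1) + E (a + k - 1) * E (b - k))
      = (-1 : P) ^ m * (E (a + m) * E (b - m - 1)) - E a * E (b - 1) := by
  induction m with
  | zero => simp
  | succ m ih =>
    rw [Finset.sum_Icc_succ_top (by omega), ih]
    push_cast
    ring_nf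

/-- `C'_{a,b} = ∂₀(Q̃_{a,b})` equals `Q̃_{a-1}(X')Q̃_b(X') - Q̃_a(X')Q̃_{b-1}(X')`
for `a > b ≥ 0`, where `∂₀(f) = (f - s₀ f)/(2x₁)` and `X' = (x₂,…,x_n)`.
Stated multiplied through by `2x₁`. -/
theorem Cprime_pair_formula (n : ℕ) (hn : 1 ≤ n) (a b : ℤ) (hb : 0 ≤ b) (hab : b < a) :
    QtpZ (Finset.range n) a b - s0 (QtpZ (Finset.range n) a b)
      = 2 * X 0 *
        (QtZ (Finset.Ico 1 n) (a - 1) * QtZ (Finset.Ico 1 n) b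
          - QtZ (Finset.Ico 1 n) a * QtZ (Finset.Ico 1 n) (b - 1)) := by
  set E : ℤ → MvPolynomial ℕ ℤ := QtZ (Finset.Ico 1 n) with hE
  have hQ : ∀ i : ℤ, QtZ (Finset.range n) i = E i + X 0 * E (i - 1) := QtZ_range n hn
  have hs : ∀ i : ℤ, s0 (QtZ (Finset.range n) i) = E i - X 0 * E (i - 1) := by
    intro i
    rw [hQ, map_add, map_mul, s0_X0, hE, s0_QtZ_Ico, s0_QtZ_Ico]
    ring
  have hzero : E (b - ↑b.toNat - 1) = 0 := by
    have : b - ↑b.toNat - 1 < 0 := by omega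
    simp only [hE, QtZ, if_neg (not_le.mpr this)]
  have key : ∑ k ∈ Finset.Icc 1 b.toNat,
      (-1 : MvPolynomial ℕ ℤ) ^ k * (E (a + k) * E (b - k - 1) + E (a + k - 1) * E (b - k))
        = -(E a * E (b - 1)) := by
    rw [tele E a b b.toNat, hzero]
    ring
  rw [QtpZ]
  simp only [map_add, map_mul, map_sum, map_ofNat, map_pow, map_neg, map_one]
  have sumdiff :
      (∑ k ∈ Finset.Icc 1 b.toNat,
          (-1 : MvPolynomial ℕ ℤ) ^ k * QtZ (Finset.range n) (a + k) * QtZ (Finset.range n) (b - k))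
        - ∑ k ∈ Finset.Icc 1 b.toNat,
          (-1 : MvPolynomial ℕ ℤ) ^ k * s0 (QtZ (Finset.range n) (a + k)) * s0 (QtZ (Finset.range n) (b - k))
      = 2 * X 0 * ∑ k ∈ Finset.Icc 1 b.toNat,
          (-1 : MvPolynomial ℕ ℤ) ^ k * (E (a + k) * E (b - k - 1) + E (a + k - 1) * E (b - k)) := by
    rw [← Finset.sum_sub_distrib, Finset.mul_sum]
    refine Finset.sum_congr rfl fun k _ => ?_
    rw [hs, hs, hQ, hQ]
    ring
  have expand :
      QtZ (Finset.range n) a * QtZ (Finset.range n) b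
          + 2 * ∑ k ∈ Finset.Icc 1 b.toNat,
              (-1 : MvPolynomial ℕ ℤ) ^ k * QtZ (Finset.range n) (a + k) * QtZ (Finset.range n) (b - k)
        - (s0 (QtZ (Finset.range n) a) * s0 (QtZ (Finset.range n) b)
          + 2 * ∑ k ∈ Finset.Icc 1 b.toNat,
              (-1 : MvPolynomial ℕ ℤ) ^ k * s0 (QtZ (Finset.range n) (a + k)) * s0 (QtZ (Finset.range n) (b - k)))
      = (QtZ (Finset.range n) a * QtZ (Finset.range n) b
          - s0 (QtZ (Finset.range n) a) * s0 (QtZ (Finset.range n) b))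
        + 2 * ((∑ k ∈ Finset.Icc 1 b.toNat,
              (-1 : MvPolynomial ℕ ℤ) ^ k * QtZ (Finset.range n) (a + k) * QtZ (Finset.range n) (b - k))
          - ∑ k ∈ Finset.Icc 1 b.toNat,
              (-1 : MvPolynomial ℕ ℤ) ^ k * s0 (QtZ (Finset.range n) (a + k)) * s0 (QtZ (Finset.range n) (b - k))) := by
    ring
  rw [expand, sumdiff, key, hs a, hs b, hQ a, hQ b]
  ring
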